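/- Let (W, S) be a Coxeter system and γ a closed path (t₀, t₁, …, t_n = t₀) in S with each m(t_{i-1}, t_i) odd. Then p_γ := (t₁t₀)^{l₁}⋯(t_n t_{n-1})^{l_n} lies in the centralizer of t₀ in W. -/

import Mathlib

private lemma block_conj {W : Type*} [Group W] (s t : W) (hs : s * s = 1) (ht : t * t = 1)
    (l : ℕ) (h : (s * t) ^ (2 * l + 1) = 1) :
    ((t * s) ^ l)⁻¹ * s * (t * s) ^ l = t := by
  have hscj : SemiconjBy s (t * s) (s * t) := by
    simp [SemiconjBy, mul_assoc]
  have hinv : ((t * s) ^ l)⁻¹ = (s * t) ^ l := by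
    rw [← inv_pow]
    congr 1
    rw [mul_inv_rev, inv_eq_of_mul_eq_one_left hs, inv_eq_of_mul_eq_one_left ht]
  have h2 : (s * t) ^ (2 * l) = t * s := by
    have h1 : (s * t) ^ (2 * l) * (s * t) = 1 := by
      rw [← pow_succ]; simpa using h
    rw [eq_inv_of_mul_eq_one_left h1, mul_inv_rev,
      inv_eq_of_mul_eq_one_left hs, inv_eq_of_mul_eq_one_left ht]
  calc ((t * s) ^ l)⁻¹ * s * (t * s) ^ l
      = (s * t) ^ l * (s * (t * s) ^ l) := by rw [hinv, mul_assoc]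
    _ = (s * t) ^ l * ((s * t) ^ l * s) := by rw [(hscj.pow_right l).eq]
    _ = (s * t) ^ (2 * l) * s := by rw [← mul_assoc, ← pow_add, two_mul]
    _ = t * (s * s) := by rw [h2, mul_assoc]
    _ = t := by rw [hs, mul_one]

private lemma path_conj {B W : Type*} [Group W] {M : CoxeterMatrix B} (cs : CoxeterSystem M W) :
    ∀ (n : ℕ) (t : Fin (n + 1) → B) (l : Fin n → ℕ),
      (∀ k : Fin n,
        orderOf (cs.simple (t k.castSucc) * cs.simple (t k.succ)) = 2 * l k + 1) →
      ((List.ofFn fun k : Fin n =>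
          (cs.simple (t k.succ) * cs.simple (t k.castSucc)) ^ l k).prod)⁻¹ *
        cs.simple (t 0) *
        (List.ofFn fun k : Fin n =>
          (cs.simple (t k.succ) * cs.simple (t k.castSucc)) ^ l k).prod
      = cs.simple (t (Fin.last n)) := by
  intro n
  induction n with
  | zero => intro t l _; simp [Fin.last]
  | succ n ih =>
    intro t l hodd
    have hrest := ih (t ∘ Fin.succ) (l ∘ Fin.succ) (fun k => by
      have := hodd k.succ
      simpa only [Function.comp_apply, Fin.succ_castSucc] using this)
    have h0 := hodd 0
    have hb : ((cs.simple (t (Fin.succ 0)) * cs.simple (t (Fin.castSucc 0))) ^ l 0)⁻¹ *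
        cs.simple (t 0) *
        (cs.simple (t (Fin.succ 0)) * cs.simple (t (Fin.castSucc 0))) ^ l 0
        = cs.simple (t 1) := by
      have := block_conj (cs.simple (t (Fin.castSucc 0))) (cs.simple (t (Fin.succ 0)))
        (by simpa using cs.simple_mul_simple_self (t (Fin.castSucc 0)))
        (by simpa using cs.simple_mul_simple_self (t (Fin.succ 0)))
        (l 0) (by rw [← h0]; exact pow_orderOf_eq_one _)
      simpa [Fin.castSucc_zero] using this
    rw [List.ofFn_succ]
    simp only [List.prod_cons, mul_inv_rev]
    calc _ = (List.ofFn fun k : Fin n =>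
          (cs.simple ((t ∘ Fin.succ) k.succ) * cs.simple ((t ∘ Fin.succ) k.castSucc)) ^ (l ∘ Fin.succ) k).prod⁻¹ *
          (((cs.simple (t (Fin.succ 0)) * cs.simple (t (Fin.castSucc 0))) ^ l 0)⁻¹ *
            cs.simple (t 0) *
            (cs.simple (t (Fin.succ 0)) * cs.simple (t (Fin.castSucc 0))) ^ l 0) *
          (List.ofFn fun k : Fin n =>
          (cs.simple ((t ∘ Fin.succ) k.succ) * cs.simple ((t ∘ Fin.succ) k.castSucc)) ^ (l ∘ Fin.succ) k).prod := by
          simp only [Function.comp, Fin.succ_castSucc, mul_assoc]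
      _ = cs.simple (t (Fin.last (n+1))) := by
          rw [hb]
          have h1 : (t ∘ Fin.succ) 0 = t 1 := by simp
          have h2 : (t ∘ Fin.succ) (Fin.last n) = t (Fin.last (n + 1)) := by
            simp [Function.comp, Fin.succ_last]
          rw [← h1, hrest, h2]

/-- Let `(W, S)` be a Coxeter system and `γ = (t₀, …, t_n)` a closed path in `S`
(`t_n = t₀`) along which every `m(t_{i-1}, t_i) = 2 lᵢ + 1` is odd.  Then
`p_γ := (t₁ t₀)^{l₁} ⋯ (t_n t_{n-1})^{l_n}` lies in the centralizer of `t₀`. -/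
theorem p_gamma_closed_path_centralizes
    {B W : Type*} [Group W] {M : CoxeterMatrix B} (cs : CoxeterSystem M W)
    (n : ℕ) (t : Fin (n + 1) → B) (l : Fin n → ℕ)
    (hclosed : t (Fin.last n) = t 0)
    (hodd : ∀ k : Fin n,
      orderOf (cs.simple (t k.castSucc) * cs.simple (t k.succ)) = 2 * l k + 1)
    (p : W)
    (hp : p = (List.ofFn fun k : Fin n =>
      (cs.simple (t k.succ) * cs.simple (t k.castSucc)) ^ l k).prod) :
    p ∈ Subgroup.centralizer {cs.simple (t 0)} := by
  have h := path_conj cs n t l hodd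
  rw [hclosed] at h
  rw [Subgroup.mem_centralizer_iff]
  intro x hx
  rw [Set.mem_singleton_iff] at hx
  subst hx hp
  set P := (List.ofFn fun k : Fin n =>
    (cs.simple (t k.succ) * cs.simple (t k.castSucc)) ^ l k).prod with hP
  calc cs.simple (t 0) * P = P * (P⁻¹ * cs.simple (t 0) * P) := by group
    _ = P * cs.simple (t 0) := by rw [h]
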